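/- Fix p ≥ 1 and block sizes n : Fin p → ℕ with n k ≥ 1, let ι := Σ k, Fin (n k), let G := ∏_k U(n k) with its Haar probability measure μ, and for ρ ∈ M_ι(ℂ) define the block twirl Λ(ρ) := ∫_G (blockDiagonal' V) · ρ · (blockDiagonal' V)† dμ(V). Then Λ(ρ) = Λ(diag(ρ)), where diag(ρ) is the diagonal matrix with the same diagonal entries as ρ; that is, the block twirl depends only on the diagonal part of ρ. -/

import Mathlib

open MeasureTheory Matrix

attribute [local instance] Matrix.normedAddCommGroup Matrix.normedSpace

noncomputable instance (m : ℕ) : MeasurableSpace (Matrix.unitaryGroup (Fin m) ℂ) := borel _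
instance (m : ℕ) : BorelSpace (Matrix.unitaryGroup (Fin m) ℂ) := ⟨rfl⟩

section Aux

instance matrixSecondCountable {m n : Type*} [Fintype m] [Fintype n] :
    SecondCountableTopology (Matrix m n ℂ) :=
  inferInstanceAs (SecondCountableTopology (m → n → ℂ))

instance unitaryGroup.instSecondCountable (m : ℕ) :
    SecondCountableTopology (Matrix.unitaryGroup (Fin m) ℂ) :=
  TopologicalSpace.Subtype.secondCountableTopology _

noncomputable instance matrixContinuousENorm {m n : Type*} [Fintype m] [Fintype n] :
    ContinuousENorm (Matrix m n ℂ) :=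
  inferInstanceAs (ContinuousENorm (m → n → ℂ))

instance unitaryGroup.instTopologicalGroup (m : ℕ) :
    IsTopologicalGroup (Matrix.unitaryGroup (Fin m) ℂ) where
  continuous_mul := by
    apply continuous_induced_rng.2
    exact (continuous_subtype_val.comp continuous_fst).mul
      (continuous_subtype_val.comp continuous_snd)
  continuous_inv := by
    apply continuous_induced_rng.2
    have : (Subtype.val ∘ fun U : Matrix.unitaryGroup (Fin m) ℂ => U⁻¹)
        = fun U : Matrix.unitaryGroup (Fin m) ℂ => star (U : Matrix (Fin m) (Fin m) ℂ) := by
      funext U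
      rw [Function.comp_apply, ← Unitary.coe_star, Unitary.star_eq_inv']
    rw [this]
    exact continuous_subtype_val.star

instance unitaryGroup.instCompactSpace (m : ℕ) :
    CompactSpace (Matrix.unitaryGroup (Fin m) ℂ) := by
  haveI : ProperSpace (Matrix (Fin m) (Fin m) ℂ) := FiniteDimensional.proper ℂ _
  have hclosed : IsClosed (Matrix.unitaryGroup (Fin m) ℂ : Set (Matrix (Fin m) (Fin m) ℂ)) := by
    have h : (Matrix.unitaryGroup (Fin m) ℂ : Set (Matrix (Fin m) (Fin m) ℂ)) =
        {A | star A * A = 1} ∩ {A | A * star A = 1} := by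
      ext A
      exact Unitary.mem_iff
    rw [h]
    exact (isClosed_eq (continuous_star.mul continuous_id) continuous_const).inter
      (isClosed_eq (continuous_id.mul continuous_star) continuous_const)
  have hbdd : Bornology.IsBounded
      (Matrix.unitaryGroup (Fin m) ℂ : Set (Matrix (Fin m) (Fin m) ℂ)) :=
    isBounded_iff_forall_norm_le.2 ⟨1, fun A hA => entrywise_sup_norm_bound_of_unitary hA⟩
  exact isCompact_iff_compactSpace.mp (Metric.isCompact_of_isClosed_isBounded hclosed hbdd)

/-- Sign sums: `∑_{ε : ι → Bool} d_ε(i) d_ε(j) = 2^|ι| δ_{ij}`. -/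
lemma sum_sign_mul_sign {ι : Type*} [Fintype ι] [DecidableEq ι] (i j : ι) :
    (∑ ε : ι → Bool, ((if ε i then 1 else -1) * (if ε j then 1 else -1) : ℂ))
      = if i = j then (2 ^ Fintype.card ι : ℂ) else 0 := by
  rcases eq_or_ne i j with rfl | hij
  · simp only [if_pos rfl]
    have h1 : ∀ ε : ι → Bool, ((if ε i then 1 else -1) * (if ε i then 1 else -1) : ℂ) = 1 := by
      intro ε; cases ε i <;> simp
    rw [Finset.sum_congr rfl fun ε _ => h1 ε]
    simp [Finset.card_univ]
  · rw [if_neg hij]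
    set f : (ι → Bool) → ℂ :=
      fun ε => ((if ε i then 1 else -1) * (if ε j then 1 else -1) : ℂ) with hf
    have hinv : Function.Involutive (fun ε : ι → Bool => Function.update ε i (!ε i)) := by
      intro ε
      funext x
      rcases eq_or_ne x i with rfl | hx
      · simp
      · simp [Function.update_of_ne hx]
    have hcomp : ∑ ε : ι → Bool, f (Function.update ε i (!ε i)) = ∑ ε : ι → Bool, f ε :=
      Equiv.sum_comp hinv.toPerm f
    have hneg : ∀ ε : ι → Bool, f (Function.update ε i (!ε i)) = -f ε := by
      intro ε
      simp only [hf, Function.update_self, Function.update_of_ne (Ne.symm hij)]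
      cases ε i <;> cases ε j <;> norm_num
    rw [Finset.sum_congr rfl fun ε _ => hneg ε, Finset.sum_neg_distrib] at hcomp
    exact add_self_eq_zero.mp (by linear_combination -hcomp)

end Aux

set_option maxHeartbeats 2000000 in
/-- **Eq. (52).** The block twirl over the thermodynamic group
`𝒢_T = ∏ₖ U(n k)` with respect to its Haar probability measure depends only on the diagonal
part of the matrix: `Λ(ρ) = Λ(diag ρ)`. -/
theorem block_twirl_eq_twirl_of_diagonal (p : ℕ) (hp : 1 ≤ p)
    (n : Fin p → ℕ) (hn : ∀ k, 1 ≤ n k)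
    (μ : Measure (∀ k, Matrix.unitaryGroup (Fin (n k)) ℂ))
    [μ.IsHaarMeasure] [IsProbabilityMeasure μ]
    (ρ : Matrix (Σ k, Fin (n k)) (Σ k, Fin (n k)) ℂ) :
    (∫ V : ∀ k, Matrix.unitaryGroup (Fin (n k)) ℂ,
        Matrix.blockDiagonal' (fun k => (V k : Matrix (Fin (n k)) (Fin (n k)) ℂ)) * ρ *
          star (Matrix.blockDiagonal' (fun k => (V k : Matrix (Fin (n k)) (Fin (n k)) ℂ))) ∂μ)
      = ∫ V : ∀ k, Matrix.unitaryGroup (Fin (n k)) ℂ,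
          Matrix.blockDiagonal' (fun k => (V k : Matrix (Fin (n k)) (Fin (n k)) ℂ)) *
            Matrix.diagonal (fun i => ρ i i) *
            star (Matrix.blockDiagonal' (fun k => (V k : Matrix (Fin (n k)) (Fin (n k)) ℂ))) ∂μ := by
  classical
  set G := ∀ k, Matrix.unitaryGroup (Fin (n k)) ℂ with hG
  -- right invariance of the Haar probability measure on the compact group `G`
  haveI : μ.IsMulRightInvariant := by
    constructor
    intro g
    haveI : IsProbabilityMeasure (Measure.map (· * g) μ) :=
      Measure.isProbabilityMeasure_map (continuous_mul_right g).measurable.aemeasurable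
    exact Measure.isHaarMeasure_eq_of_isProbabilityMeasure _ μ
  set B : G → Matrix (Σ k, Fin (n k)) (Σ k, Fin (n k)) ℂ :=
    fun V => Matrix.blockDiagonal' (fun k => (V k : Matrix (Fin (n k)) (Fin (n k)) ℂ)) with hB
  have hBcont : Continuous B := by
    apply Continuous.matrix_blockDiagonal'
    exact continuous_pi fun k => continuous_subtype_val.comp (continuous_apply k)
  set F : G → Matrix (Σ k, Fin (n k)) (Σ k, Fin (n k)) ℂ :=
    fun V => B V * ρ * star (B V) with hF
  set Fd : G → Matrix (Σ k, Fin (n k)) (Σ k, Fin (n k)) ℂ :=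
    fun V => B V * Matrix.diagonal (fun i => ρ i i) * star (B V) with hFd
  have hFcont : Continuous F := (hBcont.mul continuous_const).mul hBcont.star
  have hFdcont : Continuous Fd := (hBcont.mul continuous_const).mul hBcont.star
  have hint : ∀ f : G → Matrix (Σ k, Fin (n k)) (Σ k, Fin (n k)) ℂ,
      Continuous f → Integrable f μ := by
    intro f hf
    exact hf.integrable_of_hasCompactSupport
      (IsCompact.of_isClosed_subset isCompact_univ (isClosed_tsupport f) (Set.subset_univ _))
  -- the sign diagonal unitaries
  have hmem : ∀ (ε : (Σ k, Fin (n k)) → Bool) (k : Fin p),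
      (Matrix.diagonal (fun x : Fin (n k) => if ε ⟨k, x⟩ then (1 : ℂ) else -1)) ∈
        Matrix.unitaryGroup (Fin (n k)) ℂ := by
    intro ε k
    rw [Matrix.mem_unitaryGroup_iff, Matrix.star_eq_conjTranspose,
      Matrix.diagonal_conjTranspose, Matrix.diagonal_mul_diagonal]
    have hv : (fun x : Fin (n k) =>
        (if ε ⟨k, x⟩ then (1 : ℂ) else -1) *
          Star.star (fun y : Fin (n k) => if ε ⟨k, y⟩ then (1 : ℂ) else -1) x)
        = fun _ : Fin (n k) => (1 : ℂ) := by
      funext x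
      simp only [Pi.star_apply]
      cases ε ⟨k, x⟩ <;> simp
    rw [hv]
    exact Matrix.diagonal_one
  set D : ((Σ k, Fin (n k)) → Bool) → G :=
    fun ε k => ⟨Matrix.diagonal (fun x : Fin (n k) => if ε ⟨k, x⟩ then (1 : ℂ) else -1),
      hmem ε k⟩ with hD
  -- pointwise averaging identity
  have key : ∀ V : G, ∑ ε : (Σ k, Fin (n k)) → Bool, F (V * D ε) = (2 ^ Fintype.card (Σ k, Fin (n k)) : ℂ) • Fd V := by
    intro V
    have hBmul : ∀ ε : (Σ k, Fin (n k)) → Bool,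
        B (V * D ε) = B V * Matrix.diagonal
          (fun i : Σ k, Fin (n k) => if ε i then (1 : ℂ) else -1) := by
      intro ε
      rw [hB]
      beta_reduce
      have : (fun k => ((V * D ε) k : Matrix (Fin (n k)) (Fin (n k)) ℂ))
          = fun k => (V k : Matrix (Fin (n k)) (Fin (n k)) ℂ) *
              Matrix.diagonal (fun x : Fin (n k) => if ε ⟨k, x⟩ then (1 : ℂ) else -1) := rfl
      rw [this, Matrix.blockDiagonal'_mul, Matrix.blockDiagonal'_diagonal]
    have hstar : ∀ ε : (Σ k, Fin (n k)) → Bool,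
        star (Matrix.diagonal (fun i : Σ k, Fin (n k) => if ε i then (1 : ℂ) else -1))
          = Matrix.diagonal (fun i : Σ k, Fin (n k) => if ε i then (1 : ℂ) else -1) := by
      intro ε
      ext a b
      rcases eq_or_ne a b with rfl | hab
      · rw [Matrix.star_apply, Matrix.diagonal_apply_eq]
        cases ε a <;> simp
      · rw [Matrix.star_apply, Matrix.diagonal_apply_ne _ hab,
          Matrix.diagonal_apply_ne _ (Ne.symm hab)]
        simp
    have hsum : ∑ ε : (Σ k, Fin (n k)) → Bool,
        (Matrix.diagonal (fun i : Σ k, Fin (n k) => if ε i then (1 : ℂ) else -1) * ρ *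
          Matrix.diagonal (fun i : Σ k, Fin (n k) => if ε i then (1 : ℂ) else -1))
        = (2 ^ Fintype.card (Σ k, Fin (n k)) : ℂ) • Matrix.diagonal (fun i => ρ i i) := by
      ext i j
      rw [Matrix.sum_apply]
      have hentry : ∀ ε : (Σ k, Fin (n k)) → Bool,
          (Matrix.diagonal (fun i : Σ k, Fin (n k) => if ε i then (1 : ℂ) else -1) * ρ *
            Matrix.diagonal (fun i : Σ k, Fin (n k) => if ε i then (1 : ℂ) else -1)) i j
          = ρ i j * ((if ε i then (1 : ℂ) else -1) * (if ε j then (1 : ℂ) else -1)) := by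
        intro ε
        rw [Matrix.mul_diagonal, Matrix.diagonal_mul]
        ring
      rw [Finset.sum_congr rfl fun ε _ => hentry ε, ← Finset.mul_sum, sum_sign_mul_sign i j]
      rcases eq_or_ne i j with rfl | hij
      · simp [Matrix.diagonal_apply_eq, mul_comm]
      · simp [Matrix.diagonal_apply_ne _ hij, hij]
    calc ∑ ε : (Σ k, Fin (n k)) → Bool, F (V * D ε)
        = ∑ ε : (Σ k, Fin (n k)) → Bool,
            B V * (Matrix.diagonal (fun i : Σ k, Fin (n k) => if ε i then (1 : ℂ) else -1) * ρ *
              Matrix.diagonal (fun i : Σ k, Fin (n k) => if ε i then (1 : ℂ) else -1)) *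
                star (B V) := by
          refine Finset.sum_congr rfl fun ε _ => ?_
          rw [hF]
          simp only [hBmul ε, StarMul.star_mul, hstar ε]
          simp only [Matrix.mul_assoc]
      _ = B V * (∑ ε : (Σ k, Fin (n k)) → Bool,
            (Matrix.diagonal (fun i : Σ k, Fin (n k) => if ε i then (1 : ℂ) else -1) * ρ *
              Matrix.diagonal (fun i : Σ k, Fin (n k) => if ε i then (1 : ℂ) else -1))) *
                star (B V) := by
          rw [← Finset.sum_mul, ← Finset.mul_sum]
      _ = (2 ^ Fintype.card (Σ k, Fin (n k)) : ℂ) • Fd V := by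
          rw [hsum, hFd]
          simp only [Matrix.smul_mul, Matrix.mul_smul]
  -- now integrate
  have hIntD : ∀ ε : (Σ k, Fin (n k)) → Bool, Integrable (fun V => F (V * D ε)) μ :=
    fun ε => hint _ (hFcont.comp (continuous_mul_right (D ε)))
  have h1 : ∫ V, ((2 ^ Fintype.card (Σ k, Fin (n k)) : ℂ) • Fd V) ∂μ
      = ∑ ε : (Σ k, Fin (n k)) → Bool, ∫ V, F (V * D ε) ∂μ := by
    rw [← integral_finset_sum _ fun ε _ => hIntD ε]
    congr 1
    funext V
    rw [key V]
  have h2 : ∀ ε : (Σ k, Fin (n k)) → Bool, ∫ V, F (V * D ε) ∂μ = ∫ V, F V ∂μ :=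
    fun ε => integral_mul_right_eq_self F (D ε)
  rw [integral_smul] at h1
  rw [Finset.sum_congr rfl fun ε _ => h2 ε, Finset.sum_const, Finset.card_univ,
    Fintype.card_fun, Fintype.card_bool] at h1
  have h3 : (2 ^ Fintype.card (Σ k, Fin (n k)) : ℂ) • ∫ V, Fd V ∂μ = (2 ^ Fintype.card (Σ k, Fin (n k)) : ℂ) • ∫ V, F V ∂μ := by
    rw [h1, ← Nat.cast_smul_eq_nsmul ℂ, Nat.cast_pow, Nat.cast_ofNat]
  have h4 := smul_right_injective (Matrix (Σ k, Fin (n k)) (Σ k, Fin (n k)) ℂ)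
    (pow_ne_zero _ (two_ne_zero : (2 : ℂ) ≠ 0)) h3
  exact h4.symm
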